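/- Let α be a partial action of a group G on a unital ring R and H a subgroup of G. If R*_α G has right Krull dimension, then R*_{α_H} H has right Krull dimension and Kdim(R*_{α_H} H) ≤ Kdim(R*_α G). In particular, if R*_α G has right Krull dimension then R has right Krull dimension and Kdim(R) ≤ Kdim(R*_α G). -/

import Mathlib

/-- A unital (untwisted) partial action of a group `G` on a unital ring `R`:
the domain `D g` is the ideal generated by the central idempotent `e g`
(`D g = {x | e g * x = x}`), and `act g` is the ring isomorphism
`α_g : D g⁻¹ → D g` (values outside `D g⁻¹` are irrelevant). -/
structure PartialAction (G : Type) [Group G] (R : Type) [Ring R] where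
  e : G → R
  idem : ∀ g, e g * e g = e g
  central : ∀ g r, e g * r = r * e g
  e_one : e 1 = 1
  act : G → R → R
  act_mem : ∀ g x, e g⁻¹ * x = x → e g * act g x = act g x
  act_add : ∀ g x y, e g⁻¹ * x = x → e g⁻¹ * y = y →
    act g (x + y) = act g x + act g y
  act_mul : ∀ g x y, e g⁻¹ * x = x → e g⁻¹ * y = y →
    act g (x * y) = act g x * act g y
  act_one : ∀ x, act 1 x = x
  inv_act : ∀ g x, e g⁻¹ * x = x → act g⁻¹ (act g x) = x
  -- α_g(D_{g⁻¹} ∩ D_h) = D_g ∩ D_{gh}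
  act_range : ∀ g h x, e g⁻¹ * x = x → e h * x = x → e (g * h) * act g x = act g x
  act_range' : ∀ g h y, e g * y = y → e (g * h) * y = y →
    ∃ x, e g⁻¹ * x = x ∧ e h * x = x ∧ act g x = y
  -- α_g ∘ α_h = α_{gh} on α_{h⁻¹}(D_h ∩ D_{g⁻¹})
  comp : ∀ g h a, e h⁻¹ * a = a → e (h⁻¹ * g⁻¹) * a = a →
    act g (act h a) = act (g * h) a

/-- A realization of the partial skew group ring `R *_α G`:  a ring `A` with
maps `δ g : D g → A` such that `A = ⊕_{g ∈ G} D g δ_g` with multiplication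
`(a δ_g)(b δ_h) = α_g(α_{g⁻¹}(a) b) δ_{gh}`. -/
structure IsPartialSkewGroupRing {G R : Type} [Group G] [Ring R]
    (pa : PartialAction G R) (A : Type) [Ring A] (δ : G → R → A) : Prop where
  proj : ∀ g a, δ g a = δ g (pa.e g * a)
  add : ∀ g a b, δ g (a + b) = δ g a + δ g b
  mul : ∀ g h a b, pa.e g * a = a → pa.e h * b = b →
    δ g a * δ h b = δ (g * h) (pa.act g (pa.act g⁻¹ a * b))
  one : δ 1 1 = 1
  indep : ∀ (s : Finset G) (a : G → R), (∀ g, pa.e g * a g = a g) →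
    (∑ g ∈ s, δ g (a g)) = 0 → ∀ g ∈ s, a g = 0
  span : ∀ x : A, ∃ (s : Finset G) (a : G → R),
    (∀ g, pa.e g * a g = a g) ∧ x = ∑ g ∈ s, δ g (a g)
/-- `DeviationLE o α` says that the deviation of the poset `α` (in the sense of
Gabriel–Rentschler) is at most the ordinal `o`:  in every descending chain
`f 0 ≥ f 1 ≥ …`, for all but finitely many `n` the factor interval
`[f (n+1), f n]` is either trivial or has deviation `≤ o'` for some `o' < o`. -/
def DeviationLE (o : Ordinal.{0}) (α : Type) [Preorder α] : Prop :=
  ∀ f : ℕ → α, (∀ n, f (n + 1) ≤ f n) →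
    ∃ N : ℕ, ∀ n ≥ N, f n ≤ f (n + 1) ∨
      ∃ (o' : Ordinal.{0}) (_ : o' < o),
        DeviationLE o' (Set.Icc (f (n + 1)) (f n))
termination_by o

/-- A module `M` has Krull dimension when the lattice of its submodules has
(ordinal-valued) deviation. -/
def HasKrullDimModule (R M : Type) [Ring R] [AddCommGroup M] [Module R M] : Prop :=
  ∃ o : Ordinal.{0}, DeviationLE o (Submodule R M)

/-- A ring has right Krull dimension when the lattice of its right ideals,
i.e. of left ideals of the opposite ring, has deviation. -/
def HasRightKrullDim (A : Type) [Ring A] : Prop :=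
  ∃ o : Ordinal.{0}, DeviationLE o (Submodule Aᵐᵒᵖ Aᵐᵒᵖ)

/-- `Kdim A ≤ Kdim B` (for the right Krull dimensions):  every ordinal bounding
the deviation of the right ideal lattice of `B` also bounds that of `A`. -/
def RightKrullDimLE (A B : Type) [Ring A] [Ring B] : Prop :=
  ∀ o : Ordinal.{0}, DeviationLE o (Submodule Bᵐᵒᵖ Bᵐᵒᵖ) →
    DeviationLE o (Submodule Aᵐᵒᵖ Aᵐᵒᵖ)


set_option linter.unusedSectionVars false

section Coeff
open scoped Classical

variable {G R : Type} [Group G] [Ring R] {pa : PartialAction G R}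
  {A : Type} [Ring A] {δ : G → R → A} (hcp : IsPartialSkewGroupRing pa A δ)

include hcp

lemma delta_zero (g : G) : δ g 0 = (0 : A) := by
  have h := hcp.add g 0 0
  rw [add_zero] at h
  exact left_eq_add.mp h

lemma delta_neg (g : G) (a : R) : δ g (-a) = -(δ g a) := by
  have h := hcp.add g a (-a)
  rw [add_neg_cancel, delta_zero hcp] at h
  exact (eq_neg_of_add_eq_zero_right h.symm)

lemma delta_sub (g : G) (a b : R) : δ g (a - b) = δ g a - δ g b := by
  rw [sub_eq_add_neg, hcp.add, delta_neg hcp, sub_eq_add_neg]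

lemma coeff_unique (s t : Finset G) (a b : G → R)
    (ha : ∀ g, pa.e g * a g = a g) (hb : ∀ g, pa.e g * b g = b g)
    (ha0 : ∀ g ∉ s, a g = 0) (hb0 : ∀ g ∉ t, b g = 0)
    (h : ∑ g ∈ s, δ g (a g) = ∑ g ∈ t, δ g (b g)) : a = b := by
  have h1 : ∑ g ∈ s ∪ t, δ g (a g) = ∑ g ∈ s, δ g (a g) :=
    (Finset.sum_subset Finset.subset_union_left (fun g _ hg => by
      rw [ha0 g hg, delta_zero hcp])).symm
  have h2 : ∑ g ∈ s ∪ t, δ g (b g) = ∑ g ∈ t, δ g (b g) :=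
    (Finset.sum_subset Finset.subset_union_right (fun g _ hg => by
      rw [hb0 g hg, delta_zero hcp])).symm
  have h0 : ∑ g ∈ s ∪ t, δ g (a g - b g) = 0 := by
    simp only [delta_sub hcp]
    rw [Finset.sum_sub_distrib, h1, h2, h, sub_self]
  have key := hcp.indep (s ∪ t) (fun g => a g - b g)
    (fun g => by rw [mul_sub, ha, hb]) h0
  funext g
  by_cases hg : g ∈ s ∪ t
  · exact sub_eq_zero.mp (key g hg)
  · rw [Finset.mem_union] at hg
    push_neg at hg
    rw [ha0 g hg.1, hb0 g hg.2]

noncomputable def suppC (x : A) : Finset G := (hcp.span x).choose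

noncomputable def coeff (x : A) : G → R :=
  fun g => if g ∈ suppC hcp x then (hcp.span x).choose_spec.choose g else 0

lemma coeff_e (x : A) (g : G) : pa.e g * coeff hcp x g = coeff hcp x g := by
  unfold coeff
  split
  · exact (hcp.span x).choose_spec.choose_spec.1 g
  · exact mul_zero _

lemma coeff_vanish (x : A) {g : G} (hg : g ∉ suppC hcp x) : coeff hcp x g = 0 := by
  unfold coeff
  rw [if_neg hg]

lemma sum_coeff (x : A) : x = ∑ g ∈ suppC hcp x, δ g (coeff hcp x g) := by
  conv_lhs => rw [(hcp.span x).choose_spec.choose_spec.2]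
  refine Finset.sum_congr rfl fun g hg => ?_
  unfold coeff
  rw [if_pos hg]

lemma coeff_eq (x : A) (s : Finset G) (a : G → R) (ha : ∀ g, pa.e g * a g = a g)
    (ha0 : ∀ g ∉ s, a g = 0) (h : x = ∑ g ∈ s, δ g (a g)) : coeff hcp x = a :=
  coeff_unique hcp (suppC hcp x) s _ a (coeff_e hcp x) ha
    (fun g hg => coeff_vanish hcp x hg) ha0 (by rw [← sum_coeff hcp x, h])

lemma sum_coeff_subset (x : A) {u : Finset G} (hu : suppC hcp x ⊆ u) :
    x = ∑ g ∈ u, δ g (coeff hcp x g) := by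
  conv_lhs => rw [sum_coeff hcp x]
  exact Finset.sum_subset hu (fun g _ hg => by rw [coeff_vanish hcp x hg, delta_zero hcp])

lemma coeff_add (x y : A) :
    coeff hcp (x + y) = fun g => coeff hcp x g + coeff hcp y g := by
  apply coeff_eq hcp _ (suppC hcp x ∪ suppC hcp y)
  · intro g
    rw [mul_add, coeff_e, coeff_e]
  · intro g hg
    rw [Finset.mem_union] at hg
    push_neg at hg
    rw [coeff_vanish hcp x hg.1, coeff_vanish hcp y hg.2, add_zero]
  · have e1 := sum_coeff_subset hcp x (u := suppC hcp x ∪ suppC hcp y) Finset.subset_union_left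
    have e2 := sum_coeff_subset hcp y (u := suppC hcp x ∪ suppC hcp y) Finset.subset_union_right
    have : ∑ g ∈ suppC hcp x ∪ suppC hcp y, δ g (coeff hcp x g + coeff hcp y g) = x + y := by
      simp only [hcp.add]
      rw [Finset.sum_add_distrib, ← e1, ← e2]
    exact this.symm

lemma coeff_zero : coeff hcp (0 : A) = fun _ => 0 := by
  apply coeff_eq hcp _ ∅
  · intro g; exact mul_zero _
  · intro g _; rfl
  · rw [Finset.sum_empty]

lemma coeff_neg (x : A) : coeff hcp (-x) = fun g => -(coeff hcp x g) := by
  apply coeff_eq hcp _ (suppC hcp x)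
  · intro g; rw [mul_neg, coeff_e]
  · intro g hg; rw [coeff_vanish hcp x hg, neg_zero]
  · have : ∑ g ∈ suppC hcp x, δ g (-(coeff hcp x g))
        = -∑ g ∈ suppC hcp x, δ g (coeff hcp x g) := by
      simp only [delta_neg hcp, Finset.sum_neg_distrib]
    rw [this, ← sum_coeff hcp x]

lemma coeff_finset_sum {ι : Type} (u : Finset ι) (F : ι → A) (g : G) :
    coeff hcp (∑ i ∈ u, F i) g = ∑ i ∈ u, coeff hcp (F i) g := by
  classical
  induction u using Finset.induction with
  | empty => simp [coeff_zero hcp]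
  | insert _ _ hni ih =>
    simp [Finset.sum_insert hni, coeff_add hcp, ih]

lemma coeff_single (h : G) (a : R) :
    coeff hcp (δ h a) = fun g => if g = h then pa.e h * a else 0 := by
  apply coeff_eq hcp _ {h}
  · intro g
    split
    · next hg => rw [hg, ← mul_assoc, pa.idem]
    · exact mul_zero _
  · intro g hg
    rw [if_neg (by simpa using hg)]
  · rw [Finset.sum_singleton, if_pos rfl, ← hcp.proj]

lemma mul_delta_sum (h : G) (c : R) (u : Finset G) (a : G → R)
    (ha : ∀ g, pa.e g * a g = a g) :
    δ h c * ∑ g ∈ u, δ g (a g)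
      = ∑ g ∈ u, δ (h * g) (pa.act h (pa.act h⁻¹ (pa.e h * c) * a g)) := by
  rw [Finset.mul_sum]
  refine Finset.sum_congr rfl fun g _ => ?_
  rw [hcp.proj h c]
  exact hcp.mul h g _ _ (by rw [← mul_assoc, pa.idem]) (ha g)

lemma w_cond (h g : G) (c x : R) (hx : pa.e g * x = x) :
    pa.e (h * g) * (pa.act h (pa.act h⁻¹ (pa.e h * c) * x))
      = pa.act h (pa.act h⁻¹ (pa.e h * c) * x) := by
  have hec : pa.e h⁻¹⁻¹ * (pa.e h * c) = pa.e h * c := by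
    rw [inv_inv, ← mul_assoc, pa.idem]
  have hv1 : pa.e h⁻¹ * pa.act h⁻¹ (pa.e h * c) = pa.act h⁻¹ (pa.e h * c) :=
    pa.act_mem h⁻¹ _ hec
  have h1 : pa.e h⁻¹ * (pa.act h⁻¹ (pa.e h * c) * x) = pa.act h⁻¹ (pa.e h * c) * x := by
    rw [← mul_assoc, hv1]
  have h2 : pa.e g * (pa.act h⁻¹ (pa.e h * c) * x) = pa.act h⁻¹ (pa.e h * c) * x := by
    rw [← mul_assoc, pa.central g (pa.act h⁻¹ (pa.e h * c)), mul_assoc, hx]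
  exact pa.act_range h g _ h1 h2

lemma act_zero (h : G) : pa.act h 0 = 0 := by
  have h0 := pa.act_add h 0 0 (mul_zero _) (mul_zero _)
  rw [add_zero] at h0
  exact left_eq_add.mp h0

lemma coeff_mul_delta (h : G) (c : R) (x : A) :
    coeff hcp (δ h c * x) = fun g' =>
      if g' ∈ (suppC hcp x).image (h * ·)
      then pa.act h (pa.act h⁻¹ (pa.e h * c) * coeff hcp x (h⁻¹ * g')) else 0 := by
  apply coeff_eq hcp _ ((suppC hcp x).image (h * ·))
  · intro g'
    split
    · next hg' =>
      obtain ⟨g, hg, rfl⟩ := Finset.mem_image.mp hg'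
      rw [inv_mul_cancel_left]
      exact w_cond hcp h g c _ (coeff_e hcp x g)
    · exact mul_zero _
  · intro g' hg'
    rw [if_neg hg']
  · have hinj : ∀ a ∈ suppC hcp x, ∀ b ∈ suppC hcp x, h * a = h * b → a = b :=
      fun a _ b _ hab => mul_left_cancel hab
    rw [Finset.sum_image hinj]
    conv_lhs => rw [sum_coeff hcp x]
    rw [mul_delta_sum hcp h c _ _ (coeff_e hcp x)]
    refine Finset.sum_congr rfl fun g hg => ?_
    rw [if_pos (Finset.mem_image_of_mem _ hg), inv_mul_cancel_left]

variable (H : Subgroup G)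

lemma coeff_vanish_of_mem {x : A}
    (hx : x ∈ Subring.closure {y : A | ∃ h ∈ H, ∃ a : R, y = δ h a}) :
    ∀ g ∉ H, coeff hcp x g = 0 := by
  induction hx using Subring.closure_induction with
  | mem y hy =>
    obtain ⟨h, hH, a, rfl⟩ := hy
    intro g hg
    simp only [coeff_single hcp]
    exact if_neg (fun e : g = h => hg (e ▸ hH))
  | one =>
    intro g hg
    rw [← hcp.one]
    simp only [coeff_single hcp]
    exact if_neg (fun e : g = 1 => hg (e ▸ H.one_mem))
  | zero => intro g hg; rw [coeff_zero hcp]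
  | add x y hx hy ihx ihy =>
    intro g hg
    simp only [coeff_add hcp]
    rw [ihx g hg, ihy g hg, add_zero]
  | neg x hx ihx =>
    intro g hg
    simp only [coeff_neg hcp]
    rw [ihx g hg, neg_zero]
  | mul x y hx hy ihx ihy =>
    intro g hg
    have hxy : x * y = ∑ g' ∈ suppC hcp x, δ g' (coeff hcp x g') * y := by
      conv_lhs => rw [sum_coeff hcp x]
      rw [Finset.sum_mul]
    rw [hxy, coeff_finset_sum hcp]
    apply Finset.sum_eq_zero
    intro g' hg'
    by_cases hg'H : g' ∈ H
    · simp only [coeff_mul_delta hcp]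
      split
      · next hmem =>
        obtain ⟨k, hk, hkeq⟩ := Finset.mem_image.mp hmem
        have hkH : k ∉ H := fun hkH => hg (hkeq ▸ H.mul_mem hg'H hkH)
        have : g'⁻¹ * g = k := by rw [← hkeq]; group
        rw [this, ihy k hkH, mul_zero, act_zero hcp]
      · rfl
    · rw [ihx g' hg'H, delta_zero hcp, zero_mul, coeff_zero hcp]

noncomputable def piH (x : A) : A :=
  ∑ g ∈ (suppC hcp x).filter (fun g => g ∈ H), δ g (coeff hcp x g)

lemma piH_eq_sum {x : A} {u : Finset G} (hu : ∀ g ∉ u, coeff hcp x g = 0) :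
    piH hcp H x = ∑ g ∈ u.filter (fun g => g ∈ H), δ g (coeff hcp x g) := by
  unfold piH
  have e1 : ∑ g ∈ (suppC hcp x).filter (fun g => g ∈ H), δ g (coeff hcp x g)
      = ∑ g ∈ ((suppC hcp x ∪ u).filter (fun g => g ∈ H)), δ g (coeff hcp x g) :=
    Finset.sum_subset (Finset.filter_subset_filter _ Finset.subset_union_left)
      (fun g _ hgn => by
        have hgs : g ∉ suppC hcp x := fun hgs => by
          have hgH : g ∈ H := by
            rename_i hgu
            exact (Finset.mem_filter.mp hgu).2
          exact hgn (Finset.mem_filter.mpr ⟨hgs, hgH⟩)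
        rw [coeff_vanish hcp x hgs, delta_zero hcp])
  have e2 : ∑ g ∈ u.filter (fun g => g ∈ H), δ g (coeff hcp x g)
      = ∑ g ∈ ((suppC hcp x ∪ u).filter (fun g => g ∈ H)), δ g (coeff hcp x g) :=
    Finset.sum_subset (Finset.filter_subset_filter _ Finset.subset_union_right)
      (fun g _ hgn => by
        have hgu : g ∉ u := fun hgu => by
          have hgH : g ∈ H := by
            rename_i hgm
            exact (Finset.mem_filter.mp hgm).2
          exact hgn (Finset.mem_filter.mpr ⟨hgu, hgH⟩)
        rw [hu g hgu, delta_zero hcp])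
  rw [e1]
  exact e2.symm

lemma piH_mem (x : A) :
    piH hcp H x ∈ Subring.closure {y : A | ∃ h ∈ H, ∃ a : R, y = δ h a} :=
  Subring.sum_mem _ fun g hg =>
    Subring.subset_closure ⟨g, (Finset.mem_filter.mp hg).2, coeff hcp x g, rfl⟩

lemma piH_add (x y : A) : piH hcp H (x + y) = piH hcp H x + piH hcp H y := by
  set u := suppC hcp x ∪ suppC hcp y ∪ suppC hcp (x + y) with hu
  have hxu : ∀ g ∉ u, coeff hcp x g = 0 := fun g hg =>
    coeff_vanish hcp x (fun hgs => hg
      (Finset.mem_union_left _ (Finset.mem_union_left _ hgs)))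
  have hyu : ∀ g ∉ u, coeff hcp y g = 0 := fun g hg =>
    coeff_vanish hcp y (fun hgs => hg
      (Finset.mem_union_left _ (Finset.mem_union_right _ hgs)))
  have hxyu : ∀ g ∉ u, coeff hcp (x + y) g = 0 := fun g hg =>
    coeff_vanish hcp (x + y) (fun hgs => hg (Finset.mem_union_right _ hgs))
  rw [piH_eq_sum hcp H hxyu, piH_eq_sum hcp H hxu, piH_eq_sum hcp H hyu,
    ← Finset.sum_add_distrib]
  refine Finset.sum_congr rfl fun g _ => ?_
  simp [coeff_add hcp, hcp.add]

lemma piH_zero : piH hcp H (0 : A) = 0 := by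
  unfold piH
  apply Finset.sum_eq_zero
  intro g _
  simp [coeff_zero hcp, delta_zero hcp]

lemma piH_neg (x : A) : piH hcp H (-x) = -piH hcp H x := by
  have h := piH_add hcp H (-x) x
  rw [neg_add_cancel, piH_zero hcp H] at h
  exact eq_neg_of_add_eq_zero_left h.symm

lemma piH_fix {x : A} (hx : ∀ g ∉ H, coeff hcp x g = 0) : piH hcp H x = x := by
  unfold piH
  have e : ∑ g ∈ (suppC hcp x).filter (fun g => g ∈ H), δ g (coeff hcp x g)
      = ∑ g ∈ suppC hcp x, δ g (coeff hcp x g) :=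
    Finset.sum_subset (Finset.filter_subset _ _) (fun g hg hgn => by
      have hgH : g ∉ H := fun hgH => hgn (Finset.mem_filter.mpr ⟨hg, hgH⟩)
      rw [hx g hgH, delta_zero hcp])
  rw [e, ← sum_coeff hcp x]

lemma piH_mul_delta {h : G} (hh : h ∈ H) (c : R) (x : A) :
    piH hcp H (δ h c * x) = δ h c * piH hcp H x := by
  have hv : ∀ g ∉ (suppC hcp x).image (h * ·), coeff hcp (δ h c * x) g = 0 := by
    intro g hg
    simp only [coeff_mul_delta hcp]
    rw [if_neg hg]
  rw [piH_eq_sum hcp H hv]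
  unfold piH
  rw [mul_delta_sum hcp h c _ _ (coeff_e hcp x)]
  have himg : ((suppC hcp x).image (h * ·)).filter (fun g => g ∈ H)
      = ((suppC hcp x).filter (fun g => g ∈ H)).image (h * ·) := by
    ext g'
    simp only [Finset.mem_filter, Finset.mem_image]
    constructor
    · rintro ⟨⟨g, hg, rfl⟩, hgH⟩
      exact ⟨g, ⟨hg, (mul_mem_cancel_left hh).mp hgH⟩, rfl⟩
    · rintro ⟨g, ⟨hg, hgH⟩, rfl⟩
      exact ⟨⟨g, hg, rfl⟩, H.mul_mem hh hgH⟩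
  rw [himg, Finset.sum_image (fun a _ b _ hab => mul_left_cancel hab)]
  refine Finset.sum_congr rfl fun g hg => ?_
  have hgsupp : g ∈ suppC hcp x := (Finset.mem_filter.mp hg).1
  simp only [coeff_mul_delta hcp]
  rw [if_pos (Finset.mem_image_of_mem _ hgsupp), inv_mul_cancel_left]

lemma piH_mul {b : A}
    (hb : b ∈ Subring.closure {y : A | ∃ h ∈ H, ∃ a : R, y = δ h a}) (x : A) :
    piH hcp H (b * x) = b * piH hcp H x := by
  have key : ∀ x : A, piH hcp H (b * x) = b * piH hcp H x := by
    induction hb using Subring.closure_induction with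
    | mem y hy =>
      obtain ⟨h, hH, c, rfl⟩ := hy
      exact fun x => piH_mul_delta hcp H hH c x
    | zero => intro x; rw [zero_mul, piH_zero hcp H, zero_mul]
    | one => intro x; rw [one_mul, one_mul]
    | add b1 b2 h1 h2 ih1 ih2 =>
      intro x
      rw [add_mul, piH_add hcp H, ih1, ih2, add_mul]
    | neg b h ih =>
      intro x
      rw [neg_mul, piH_neg hcp H, ih, neg_mul]
    | mul b1 b2 h1 h2 ih1 ih2 =>
      intro x
      rw [mul_assoc, ih1, ih2, mul_assoc]
  exact key x

end Coeff

theorem devTransfer (o : Ordinal.{0}) :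
    ∀ (α β : Type) [Preorder α] [Preorder β] (f : α → β),
      Monotone f → (∀ a b : α, f a ≤ f b → a ≤ b) →
      DeviationLE o β → DeviationLE o α := by
  induction o using Ordinal.induction with
  | _ o IH =>
    intro α β _ _ f hmono hrefl hβ
    rw [DeviationLE] at hβ ⊢
    intro g hg
    obtain ⟨N, hN⟩ := hβ (fun n => f (g n)) (fun n => hmono (hg n))
    refine ⟨N, fun n hn => ?_⟩
    rcases hN n hn with h | ⟨o', ho', hdev⟩
    · exact Or.inl (hrefl _ _ h)
    · refine Or.inr ⟨o', ho', ?_⟩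
      exact IH o' ho' _ _
        (fun x : Set.Icc (g (n+1)) (g n) =>
          (⟨f x.1, hmono x.2.1, hmono x.2.2⟩ : Set.Icc (f (g (n+1))) (f (g n))))
        (fun a b hab => hmono hab) (fun a b hab => hrefl _ _ hab) hdev

theorem krullTransfer {S A : Type} [Ring S] [Ring A] (f : S →+* A) (π : A →+ S)
    (hπf : ∀ s, π (f s) = s) (hmul : ∀ (s : S) (x : A), π (f s * x) = s * π x)
    (o : Ordinal.{0}) (hA : DeviationLE o (Submodule Aᵐᵒᵖ Aᵐᵒᵖ)) :
    DeviationLE o (Submodule Sᵐᵒᵖ Sᵐᵒᵖ) := by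
  set F : Submodule Sᵐᵒᵖ Sᵐᵒᵖ → Submodule Aᵐᵒᵖ Aᵐᵒᵖ :=
    fun I => Submodule.span Aᵐᵒᵖ ((fun i : Sᵐᵒᵖ => MulOpposite.op (f i.unop)) '' I) with hF
  have key : ∀ (I : Submodule Sᵐᵒᵖ Sᵐᵒᵖ) (y : Aᵐᵒᵖ), y ∈ F I →
      MulOpposite.op (π y.unop) ∈ I := by
    intro I y hy
    rw [hF] at hy
    rw [Submodule.mem_span_set] at hy
    obtain ⟨c, hsupp, hsum⟩ := hy
    subst hsum
    rw [Finsupp.sum]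
    let P : Aᵐᵒᵖ →+ Sᵐᵒᵖ :=
      (MulOpposite.opAddEquiv : S ≃+ Sᵐᵒᵖ).toAddMonoidHom.comp
        (π.comp (MulOpposite.opAddEquiv : A ≃+ Aᵐᵒᵖ).symm.toAddMonoidHom)
    have : MulOpposite.op (π (∑ mi ∈ c.support, c mi • mi).unop)
        = ∑ mi ∈ c.support, MulOpposite.op (π (c mi • mi).unop) := by
      show P (∑ mi ∈ c.support, c mi • mi) = _
      rw [map_sum]
      rfl
    rw [this]
    apply Submodule.sum_mem
    intro mi hmi
    obtain ⟨i, hiI, hieq⟩ := hsupp hmi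
    have : (c mi • mi : Aᵐᵒᵖ) = MulOpposite.op (f i.unop * (c mi).unop) := by
      rw [← hieq]
      rfl
    rw [this]
    simp only [MulOpposite.unop_op]
    rw [hmul]
    have : MulOpposite.op (i.unop * π (c mi).unop)
        = MulOpposite.op (π (c mi).unop) • i := rfl
    rw [this]
    exact I.smul_mem _ hiI
  apply devTransfer o _ _ F
  · intro I J hIJ
    exact Submodule.span_mono (Set.image_mono hIJ)
  · intro I J hIJ
    intro i hiI
    have : MulOpposite.op (f i.unop) ∈ F I :=
      Submodule.subset_span ⟨i, hiI, rfl⟩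
    have h2 := key J _ (hIJ this)
    simpa [hπf] using h2
  · exact hA


open scoped Classical in
/-- Let `α` be a partial action of a group `G` on a unital
ring `R` and `H ≤ G`.  If `R*_α G` has right Krull dimension, then so does
`R*_{α_H} H` (the subring generated by the `δ h a`, `h ∈ H`) and
`Kdim(R*_{α_H} H) ≤ Kdim(R*_α G)`.  In particular `R` has right Krull
dimension and `Kdim(R) ≤ Kdim(R*_α G)`. -/
theorem partialSkewGroupRing_subgroup_krullDim
    {G R : Type} [Group G] [Ring R]
    (pa : PartialAction G R)
    (A : Type) [Ring A] (δ : G → R → A)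
    (hcp : IsPartialSkewGroupRing pa A δ) (H : Subgroup G)
    (hA : HasRightKrullDim A) :
    (HasRightKrullDim (Subring.closure {x : A | ∃ h ∈ H, ∃ a : R, x = δ h a}) ∧
      RightKrullDimLE (Subring.closure {x : A | ∃ h ∈ H, ∃ a : R, x = δ h a}) A) ∧
    (HasRightKrullDim R ∧ RightKrullDimLE R A) := by
  obtain ⟨o, ho⟩ := hA
  let B := Subring.closure {x : A | ∃ h ∈ H, ∃ a : R, x = δ h a}
  let fB : B →+* A := B.subtype
  let piB : A →+ B :=
    { toFun := fun x => ⟨piH hcp H x, piH_mem hcp H x⟩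
      map_zero' := Subtype.ext (piH_zero hcp H)
      map_add' := fun x y => Subtype.ext (piH_add hcp H x y) }
  have hpf : ∀ s : B, piB (fB s) = s := fun s =>
    Subtype.ext (piH_fix hcp H (coeff_vanish_of_mem hcp H s.2))
  have hmulB : ∀ (s : B) (x : A), piB (fB s * x) = s * piB x := fun s x =>
    Subtype.ext (piH_mul hcp H s.2 x)
  let fR : R →+* A :=
    { toFun := δ 1
      map_one' := hcp.one
      map_mul' := fun a b => by
        have h := hcp.mul 1 1 a b (by rw [pa.e_one, one_mul]) (by rw [pa.e_one, one_mul])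
        simp only [one_mul, inv_one, pa.act_one] at h
        exact h.symm
      map_zero' := delta_zero hcp 1
      map_add' := hcp.add 1 }
  let piR : A →+ R :=
    { toFun := fun x => coeff hcp x 1
      map_zero' := by show coeff hcp (0:A) 1 = 0; rw [coeff_zero hcp]
      map_add' := fun x y => by show coeff hcp (x+y) 1 = _; simp [coeff_add hcp] }
  have hpfR : ∀ a : R, piR (fR a) = a := fun a => by
    show coeff hcp (δ 1 a) 1 = a
    simp [coeff_single hcp, pa.e_one]
  have hmulR : ∀ (a : R) (x : A), piR (fR a * x) = a * piR x := fun a x => by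
    show coeff hcp (δ 1 a * x) 1 = a * coeff hcp x 1
    simp only [coeff_mul_delta hcp]
    by_cases h1 : (1 : G) ∈ suppC hcp x
    · rw [if_pos (Finset.mem_image.mpr ⟨1, h1, one_mul 1⟩)]
      simp [pa.e_one, pa.act_one]
    · rw [if_neg, coeff_vanish hcp x h1, mul_zero]
      intro hmem
      obtain ⟨g, hg, hge⟩ := Finset.mem_image.mp hmem
      rw [one_mul] at hge
      exact h1 (hge ▸ hg)
  exact ⟨⟨⟨o, krullTransfer fB piB hpf hmulB o ho⟩,
      fun o' ho' => krullTransfer fB piB hpf hmulB o' ho'⟩,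
    ⟨⟨o, krullTransfer fR piR hpfR hmulR o ho⟩,
      fun o' ho' => krullTransfer fR piR hpfR hmulR o' ho'⟩⟩
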